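/- For L ≥ 3, on H_L = ⨂_{j=1}^{L} ℂ², let N_nn = Σ_{j=1}^{L−1} σᶻ_j σᶻ_{j+1} + Σ_{j=1}^{L−2} σᶻ_j σᶻ_{j+2} (the case J = J₂ of nearest- plus next-nearest-neighbour Ising couplings). Then the nonzero operator O = σˣ_1 (σᶻ_2 − σᶻ_3) commutes with N_nn and anticommutes with σᶻ_1. Hence there is a nonzero edge-spin-flip operator commuting with N_nn, so conservation of N_nn does not forbid flipping the edge spin. -/
import Mathlib


/-!
STATEMENT 17: With N_nn = Σ_{j=1}^{L−1} σᶻ_j σᶻ_{j+1} + Σ_{j=1}^{L−2} σᶻ_j σᶻ_{j+2}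
(the J = J₂ case), the nonzero operator O = σˣ_1 (σᶻ_2 − σᶻ_3) commutes with N_nn and
anticommutes with σᶻ_1.  Sites are 0-based (paper site j ↔ index j−1).
-/

noncomputable section

open Matrix Complex

/-- Pauli X matrix. -/
def sigmaX : Matrix (Fin 2) (Fin 2) ℂ := !![0, 1; 1, 0]

/-- Pauli Y matrix. -/
def sigmaY : Matrix (Fin 2) (Fin 2) ℂ := !![0, -Complex.I; Complex.I, 0]

/-- Pauli Z matrix. -/
def sigmaZ : Matrix (Fin 2) (Fin 2) ℂ := !![1, 0; 0, -1]

/-- The operator on ⨂_{k=0}^{L-1} ℂ² acting as the 2×2 matrix `A` on the j-th tensor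
factor and as the identity on all the others (matrix entries of a tensor product). -/
def siteOp (L : ℕ) (j : ℕ) (A : Matrix (Fin 2) (Fin 2) ℂ) :
    Matrix (Fin L → Fin 2) (Fin L → Fin 2) ℂ :=
  fun s t => ∏ k : Fin L, if (k : ℕ) = j then A (s k) (t k) else (if s k = t k then 1 else 0)

/-- σˣ_j -/
def PX (L j : ℕ) : Matrix (Fin L → Fin 2) (Fin L → Fin 2) ℂ := siteOp L j sigmaX
/-- σʸ_j -/
def PY (L j : ℕ) : Matrix (Fin L → Fin 2) (Fin L → Fin 2) ℂ := siteOp L j sigmaY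
/-- σᶻ_j -/
def PZ (L j : ℕ) : Matrix (Fin L → Fin 2) (Fin L → Fin 2) ℂ := siteOp L j sigmaZ

/-- The Jordan–Wigner string Π_{k<j} σˣ_k. -/
def jwString (L j : ℕ) : Matrix (Fin L → Fin 2) (Fin L → Fin 2) ℂ :=
  ((List.range j).map (PX L)).prod

/-- Majorana operator γ_j^A = (Π_{k<j} σˣ_k) σᶻ_j (0-based site index). -/
def gammaA (L j : ℕ) : Matrix (Fin L → Fin 2) (Fin L → Fin 2) ℂ := jwString L j * PZ L j

/-- Majorana operator γ_j^B = (Π_{k<j} σˣ_k) σʸ_j (0-based site index). -/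
def gammaB (L j : ℕ) : Matrix (Fin L → Fin 2) (Fin L → Fin 2) ℂ := jwString L j * PY L j


def opOf (L : ℕ) (M : ℕ → Matrix (Fin 2) (Fin 2) ℂ) :
    Matrix (Fin L → Fin 2) (Fin L → Fin 2) ℂ :=
  fun s t => ∏ k : Fin L, M k (s k) (t k)

lemma opOf_mul (L : ℕ) (M N : ℕ → Matrix (Fin 2) (Fin 2) ℂ) :
    opOf L M * opOf L N = opOf L (fun k => M k * N k) := by
  ext s t
  simp only [opOf, Matrix.mul_apply, ← Finset.prod_mul_distrib]
  rw [show (∏ k : Fin L, ∑ v : Fin 2, M (k:ℕ) (s k) v * N (k:ℕ) v (t k))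
      = ∑ u : Fin L → Fin 2, ∏ k : Fin L, M (k:ℕ) (s k) (u k) * N (k:ℕ) (u k) (t k)
      from Fintype.prod_sum _]

lemma siteOp_eq (L j : ℕ) (A : Matrix (Fin 2) (Fin 2) ℂ) :
    siteOp L j A = opOf L (fun k => if k = j then A else 1) := by
  ext s t
  refine Finset.prod_congr rfl fun k _ => ?_
  by_cases h : (k : ℕ) = j <;> simp [h, Matrix.one_apply]

lemma opOf_congr (L : ℕ) {M N : ℕ → Matrix (Fin 2) (Fin 2) ℂ}
    (h : ∀ k, M k = N k) : opOf L M = opOf L N := by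
  rw [funext h]

lemma siteOp_mul_same (L j : ℕ) (A B : Matrix (Fin 2) (Fin 2) ℂ) :
    siteOp L j A * siteOp L j B = siteOp L j (A * B) := by
  rw [siteOp_eq, siteOp_eq, siteOp_eq, opOf_mul]
  exact opOf_congr L fun k => by by_cases h : k = j <;> simp [h]

lemma siteOp_comm (L j k : ℕ) (h : j ≠ k) (A B : Matrix (Fin 2) (Fin 2) ℂ) :
    siteOp L j A * siteOp L k B = siteOp L k B * siteOp L j A := by
  rw [siteOp_eq, siteOp_eq, opOf_mul, opOf_mul]
  exact opOf_congr L fun m => by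
    by_cases h1 : m = j <;> by_cases h2 : m = k
    · exact absurd (h1 ▸ h2 : j = k) h
    · simp [h1, h2, h]
    · simp [h1, h2, Ne.symm h]
    · simp [h1, h2]

lemma siteOp_one (L j : ℕ) : siteOp L j 1 = 1 := by
  ext s t
  have : ∀ k : Fin L, (if (k : ℕ) = j then (1 : Matrix (Fin 2) (Fin 2) ℂ) (s k) (t k)
      else (if s k = t k then 1 else 0)) = (if s k = t k then 1 else 0) := by
    intro k; by_cases h : (k : ℕ) = j <;> simp [h, Matrix.one_apply]
  rw [show siteOp L j 1 s t = _ from Finset.prod_congr rfl fun k _ => this k,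
    Finset.prod_boole, Matrix.one_apply]
  simp [funext_iff]

lemma siteOp_neg (L j : ℕ) (hj : j < L) (A : Matrix (Fin 2) (Fin 2) ℂ) :
    siteOp L j (-A) = -siteOp L j A := by
  ext s t
  have key : ∀ k : Fin L, (if (k : ℕ) = j then (-A) (s k) (t k)
      else (if s k = t k then 1 else 0))
      = (if k = (⟨j, hj⟩ : Fin L) then (-1 : ℂ) else 1)
        * (if (k : ℕ) = j then A (s k) (t k) else (if s k = t k then 1 else 0)) := by
    intro k
    by_cases h : (k : ℕ) = j
    · simp [h, Fin.ext_iff]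
    · simp [h, Fin.ext_iff]
  rw [show siteOp L j (-A) s t = _ from Finset.prod_congr rfl fun k _ => key k,
    Finset.prod_mul_distrib, Finset.prod_ite_eq']
  simp [siteOp]

-- Pauli matrix algebra
lemma XZ_anti : sigmaX * sigmaZ = -(sigmaZ * sigmaX) := by
  ext i j; fin_cases i <;> fin_cases j <;>
    simp [sigmaX, sigmaZ, Matrix.mul_apply, Fin.sum_univ_two]

lemma ZZ_one : sigmaZ * sigmaZ = 1 := by
  ext i j; fin_cases i <;> fin_cases j <;>
    simp [sigmaZ, Matrix.mul_apply, Fin.sum_univ_two, Matrix.one_apply]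

lemma PZ_comm (L a b : ℕ) : Commute (PZ L a) (PZ L b) := by
  rcases eq_or_ne a b with h | h
  · subst h; exact Commute.refl _
  · exact siteOp_comm L a b h _ _

lemma PX_PZ_comm (L a b : ℕ) (h : a ≠ b) : Commute (PX L a) (PZ L b) :=
  siteOp_comm L a b h _ _

lemma PZ_sq (L j : ℕ) : PZ L j * PZ L j = 1 := by
  rw [PZ, siteOp_mul_same, ZZ_one, siteOp_one]

lemma PX0_PZ0 (L : ℕ) (hL : 0 < L) : PX L 0 * PZ L 0 = -(PZ L 0 * PX L 0) := by
  rw [PX, PZ, siteOp_mul_same, siteOp_mul_same, XZ_anti, siteOp_neg L 0 hL]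

theorem statement_17 (L : ℕ) (hL : 3 ≤ L)
    (Nnn O : Matrix (Fin L → Fin 2) (Fin L → Fin 2) ℂ)
    (hNnn : Nnn = (∑ j ∈ Finset.range (L - 1), PZ L j * PZ L (j + 1))
                + (∑ j ∈ Finset.range (L - 2), PZ L j * PZ L (j + 2)))
    (hO : O = PX L 0 * (PZ L 1 - PZ L 2)) :
    O ≠ 0 ∧ Commute O Nnn ∧ O * PZ L 0 = -(PZ L 0 * O) := by
  have h1L : (1 : ℕ) < L := by omega
  have h0L : (0 : ℕ) < L := by omega
  -- abbreviations
  refine ⟨?_, ?_, ?_⟩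
  · -- O ≠ 0 : evaluate an entry
    intro h0
    set s : Fin L → Fin 2 := fun k => if (k : ℕ) = 1 then 1 else 0 with hs
    set t : Fin L → Fin 2 := fun k => if (k : ℕ) = 0 then 1 else if (k : ℕ) = 1 then 1 else 0 with ht
    have e1 : (PX L 0 * PZ L 1) s t = -1 := by
      rw [PX, PZ, siteOp_eq, siteOp_eq, opOf_mul]
      have : (opOf L fun k =>
          (if k = 0 then sigmaX else 1) * (if k = 1 then sigmaZ else 1)) s t
          = ∏ k : Fin L, (if k = (⟨1, h1L⟩ : Fin L) then (-1 : ℂ) else 1) := by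
        refine Finset.prod_congr rfl fun k _ => ?_
        by_cases hk0 : (k : ℕ) = 0
        · simp [hk0, hs, ht, sigmaX, Fin.ext_iff]
        · by_cases hk1 : (k : ℕ) = 1
          · simp [hk0, hk1, hs, ht, sigmaZ, Fin.ext_iff, Matrix.one_apply]
          · simp [hk0, hk1, hs, ht, Fin.ext_iff, Matrix.one_apply]
      rw [this, Finset.prod_ite_eq']
      simp
    have e2 : (PX L 0 * PZ L 2) s t = 1 := by
      rw [PX, PZ, siteOp_eq, siteOp_eq, opOf_mul]
      have : (opOf L fun k =>
          (if k = 0 then sigmaX else 1) * (if k = 2 then sigmaZ else 1)) s t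
          = ∏ k : Fin L, (1 : ℂ) := by
        refine Finset.prod_congr rfl fun k _ => ?_
        by_cases hk0 : (k : ℕ) = 0
        · simp [hk0, hs, ht, sigmaX]
        · by_cases hk1 : (k : ℕ) = 1
          · simp [hk0, hk1, hs, ht, Matrix.one_apply]
          · by_cases hk2 : (k : ℕ) = 2
            · simp [hk0, hk1, hk2, hs, ht, sigmaZ]
            · simp [hk0, hk1, hk2, hs, ht, Matrix.one_apply]
      rw [this]; simp
    have : O s t = -2 := by
      rw [hO, mul_sub, Matrix.sub_apply, e1, e2]; norm_num
    rw [h0] at this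
    simp at this
  · -- Commute O Nnn
    -- commutation with all Z's at nonzero sites
    have hOZ : ∀ a : ℕ, a ≠ 0 → Commute O (PZ L a) := by
      intro a ha
      rw [hO]
      exact ((PX_PZ_comm L 0 a (Ne.symm ha)).mul_left
        (((PZ_comm L 1 a).sub_left (PZ_comm L 2 a))))
    have hOZZ : ∀ a b : ℕ, a ≠ 0 → b ≠ 0 → Commute O (PZ L a * PZ L b) :=
      fun a b ha hb => (hOZ a ha).mul_right (hOZ b hb)
    -- the two site-0 terms
    have hz1 : (PZ L 1 - PZ L 2) * (PZ L 1 + PZ L 2) = 0 := by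
      rw [sub_mul, mul_add, mul_add, PZ_sq, PZ_sq, (PZ_comm L 2 1).eq]
      abel
    have hz2 : (PZ L 1 + PZ L 2) * (PZ L 1 - PZ L 2) = 0 := by
      rw [add_mul, mul_sub, mul_sub, PZ_sq, PZ_sq, (PZ_comm L 1 2).eq]
      abel
    have hc0 : Commute O (PZ L 0 * PZ L 1 + PZ L 0 * PZ L 2) := by
      rw [← mul_add]
      show O * _ = _ * O
      have key1 : O * (PZ L 0 * (PZ L 1 + PZ L 2)) = 0 := by
        rw [hO]
        have hcm : Commute (PZ L 1 - PZ L 2) (PZ L 0) :=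
          ((PZ_comm L 1 0).sub_left (PZ_comm L 2 0))
        rw [mul_assoc, ← mul_assoc (PZ L 1 - PZ L 2) (PZ L 0), hcm.eq,
          mul_assoc (PZ L 0), hz1]
        simp
      have key2 : (PZ L 0 * (PZ L 1 + PZ L 2)) * O = 0 := by
        rw [hO]
        have hcm : Commute (PZ L 1 + PZ L 2) (PX L 0) :=
          ((PX_PZ_comm L 0 1 (by norm_num)).symm.add_left
            (PX_PZ_comm L 0 2 (by norm_num)).symm)
        rw [mul_assoc, ← mul_assoc (PZ L 1 + PZ L 2) (PX L 0), hcm.eq,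
          mul_assoc (PX L 0), hz2]
        simp
      rw [key1, key2]
    -- decompose the sums
    obtain ⟨m, rfl⟩ : ∃ m, L = m + 3 := ⟨L - 3, by omega⟩
    have d1 : (m + 3 - 1) = (m + 1) + 1 := by omega
    have d2 : (m + 3 - 2) = m + 1 := by omega
    rw [hNnn, d1, d2,
      Finset.sum_range_succ' (fun j => PZ (m+3) j * PZ (m+3) (j + 2)) m,
      Finset.sum_range_succ' (fun j => PZ (m+3) j * PZ (m+3) (j + 1)) (m+1)]
    have : (∑ i ∈ Finset.range (m + 1), PZ (m+3) (i+1) * PZ (m+3) (i+1+1))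
        + PZ (m+3) 0 * PZ (m+3) (0+1)
        + ((∑ i ∈ Finset.range m, PZ (m+3) (i+1) * PZ (m+3) (i+1+2))
        + PZ (m+3) 0 * PZ (m+3) (0+2))
        = (PZ (m+3) 0 * PZ (m+3) 1 + PZ (m+3) 0 * PZ (m+3) 2)
        + ((∑ i ∈ Finset.range (m + 1), PZ (m+3) (i+1) * PZ (m+3) (i+1+1))
        + (∑ i ∈ Finset.range m, PZ (m+3) (i+1) * PZ (m+3) (i+1+2))) := by
      norm_num; abel
    rw [this]
    refine hc0.add_right (Commute.add_right ?_ ?_)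
    · exact Commute.sum_right _ _ _ fun i _ => hOZZ _ _ (by omega) (by omega)
    · exact Commute.sum_right _ _ _ fun i _ => hOZZ _ _ (by omega) (by omega)
  · -- anticommutation with PZ 0
    rw [hO]
    have hcm : Commute (PZ L 1 - PZ L 2) (PZ L 0) :=
      ((PZ_comm L 1 0).sub_left (PZ_comm L 2 0))
    rw [mul_assoc, hcm.eq, ← mul_assoc, PX0_PZ0 L h0L, neg_mul, mul_assoc]

end
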